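/- Let ν be a symmetric Lévy measure on ℝⁿ whose support is unbounded (i.e. ν({y : |y| > R}) > 0 for every R > 0), and let Ω ⊆ ℝⁿ be a nonempty bounded open set. For ε > 0 let Ω_ε = {x ∈ ℝⁿ : dist(x, Ω) < ε} and set C⁻¹ = lim_{ε→0⁺} inf_{x∈Ω} ν((ℝⁿ∖Ω_ε) − x) (the limit of a monotone bounded family, and C⁻¹ > 0). Then for every f ∈ L^∞(Ω), g ∈ L^∞(ℝⁿ∖Ω), and every weak solution u of Lu = f in Ω, u = g on ℝⁿ∖Ω, one has u ≤ C‖f‖_{L^∞(Ω)} + ‖g‖_{L^∞(ℝⁿ∖Ω)} a.e. -/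

import Mathlib

open MeasureTheory Filter Set Topology
open scoped ENNReal Topology Pointwise Classical

noncomputable section

abbrev Eucl (n : ℕ) : Type := EuclideanSpace ℝ (Fin n)

/-- A symmetric Lévy measure on ℝⁿ: ν({0}) = 0, ν(−A) = ν(A) for Borel A, and
∫ min(1,|y|²) dν < ∞. -/
def IsSymmLevy {n : ℕ} (ν : Measure (Eucl n)) : Prop :=
  ν {0} = 0 ∧ (∀ A : Set (Eucl n), MeasurableSet A → ν (-A) = ν A) ∧
    (∫⁻ y, ENNReal.ofReal (min 1 (‖y‖ ^ 2)) ∂ν) < ⊤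

/-- The truncated nonlocal operator: ∫_{|y| ≥ ε} (u(x) − u(x+y)) dν(y). -/
def truncL {n : ℕ} (ν : Measure (Eucl n)) (u : Eucl n → ℝ) (x : Eucl n) (ε : ℝ) : ℝ :=
  ∫ y in {y : Eucl n | ε ≤ ‖y‖}, (u x - u (x + y)) ∂ν

/-- `Lu(x)` is well defined with value `l`: the integrands are ν-integrable away from the
origin, and the principal value limit exists and equals `l`. -/
def HasLAt {n : ℕ} (ν : Measure (Eucl n)) (u : Eucl n → ℝ) (x : Eucl n) (l : ℝ) : Prop :=
  (∀ ε : ℝ, 0 < ε → IntegrableOn (fun y => u x - u (x + y)) {y : Eucl n | ε ≤ ‖y‖} ν) ∧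
  Tendsto (truncL ν u x) (𝓝[>] (0:ℝ)) (𝓝 l)

/-- Squared norm of the generalized Sobolev space V_ν^D(ℝⁿ). -/
def sobSq {n : ℕ} (ν : Measure (Eucl n)) (D : Set (Eucl n)) (u : Eucl n → ℝ) : ℝ≥0∞ :=
  (∫⁻ x in D, ENNReal.ofReal (u x ^ 2)) +
    (1/2) * ∫⁻ y in D, ∫⁻ z, ENNReal.ofReal ((u y - u (y + z)) ^ 2) ∂ν

/-- Membership in V_ν^D(ℝⁿ). -/
def MemV {n : ℕ} (ν : Measure (Eucl n)) (D : Set (Eucl n)) (u : Eucl n → ℝ) : Prop :=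
  Measurable u ∧ sobSq ν D u < ⊤

/-- Membership in H_ν^D(ℝⁿ): members of V_ν^D vanishing a.e. outside D. -/
def MemH {n : ℕ} (ν : Measure (Eucl n)) (D : Set (Eucl n)) (u : Eucl n → ℝ) : Prop :=
  MemV ν D u ∧ ∀ᵐ x ∂(volume : Measure (Eucl n)), x ∉ D → u x = 0

/-- The quadratic form ⟨u,u⟩_ν (with values in [0,∞]). -/
def formQ {n : ℕ} (ν : Measure (Eucl n)) (u : Eucl n → ℝ) : ℝ≥0∞ :=
  (1/2) * ∫⁻ y, ∫⁻ z, ENNReal.ofReal ((u y - u (y + z)) ^ 2) ∂ν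

/-- The bilinear form ⟨u,v⟩_ν. -/
def formB {n : ℕ} (ν : Measure (Eucl n)) (u v : Eucl n → ℝ) : ℝ :=
  (1/2) * ∫ y, (∫ z, (u y - u (y + z)) * (v y - v (y + z)) ∂ν)

/-- Weak solution of Lu = f in Ω, u = g on ℝⁿ∖Ω. -/
def IsWeakSol {n : ℕ} (ν : Measure (Eucl n)) (Ω : Set (Eucl n))
    (f g u : Eucl n → ℝ) : Prop :=
  MemV ν Ω u ∧ (∀ᵐ x ∂(volume : Measure (Eucl n)), x ∉ Ω → u x = g x) ∧
  ∀ φ : Eucl n → ℝ, MemH ν Ω φ → formB ν u φ = ∫ x in Ω, f x * φ x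

end

section AuxLemmas
open Function

-- algebra lemmas
lemma key_identity (a b : ℝ) :
    (a - b) * (max a 0 - max b 0) =
      (max a 0 - max b 0)^2 + max a 0 * max (-b) 0 + max (-a) 0 * max b 0 := by
  rcases le_total a 0 with ha | ha <;> rcases le_total b 0 with hb | hb
  · rw [max_eq_right ha, max_eq_right hb, max_eq_left (neg_nonneg.2 ha), max_eq_left (neg_nonneg.2 hb)]; ring
  · rw [max_eq_right ha, max_eq_left hb, max_eq_left (neg_nonneg.2 ha), max_eq_right (neg_nonpos.2 hb)]; ring
  · rw [max_eq_left ha, max_eq_right hb, max_eq_right (neg_nonpos.2 ha), max_eq_left (neg_nonneg.2 hb)]; ring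
  · rw [max_eq_left ha, max_eq_left hb, max_eq_right (neg_nonpos.2 ha), max_eq_right (neg_nonpos.2 hb)]; ring

lemma prod_nonneg' (a b : ℝ) : 0 ≤ (a - b) * (max a 0 - max b 0) := by
  rcases le_total a b with h | h
  · have h2 : max a 0 ≤ max b 0 := max_le_max h le_rfl
    nlinarith
  · have h2 : max b 0 ≤ max a 0 := max_le_max h le_rfl
    nlinarith

lemma prod_le_sq (a b : ℝ) : (a - b) * (max a 0 - max b 0) ≤ (a - b)^2 := by
  have h1 : |max a 0 - max b 0| ≤ |a - b| := abs_max_sub_max_le_abs a b 0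
  calc (a - b) * (max a 0 - max b 0) ≤ |(a - b) * (max a 0 - max b 0)| := le_abs_self _
    _ = |a - b| * |max a 0 - max b 0| := abs_mul _ _
    _ ≤ |a - b| * |a - b| := by nlinarith [abs_nonneg (a-b)]
    _ = (a - b)^2 := by rw [← abs_mul, ← sq, abs_sq]

-- sigma finiteness
lemma sigmaFinite_of_levy {n : ℕ} {ν : Measure (Eucl n)} (hν : IsSymmLevy ν) :
    SigmaFinite ν := by
  have hfar : ∀ δ : ℝ, 0 < δ → ν {y : Eucl n | δ ≤ ‖y‖} < ⊤ := by
    intro δ hδ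
    set m : ℝ := min 1 (δ^2) with hm
    have hm0 : 0 < m := lt_min one_pos (by positivity)
    have hle : ENNReal.ofReal m * ν {y : Eucl n | δ ≤ ‖y‖}
        ≤ ∫⁻ y, ENNReal.ofReal (min 1 (‖y‖ ^ 2)) ∂ν := by
      rw [← setLIntegral_const]
      calc ∫⁻ _ in {y : Eucl n | δ ≤ ‖y‖}, ENNReal.ofReal m ∂ν
          ≤ ∫⁻ y in {y : Eucl n | δ ≤ ‖y‖}, ENNReal.ofReal (min 1 (‖y‖^2)) ∂ν := by
            refine setLIntegral_mono (by fun_prop) ?_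
            intro y hy
            have hy' : δ ≤ ‖y‖ := hy
            refine ENNReal.ofReal_le_ofReal (min_le_min le_rfl ?_)
            nlinarith [norm_nonneg y, hδ.le]
        _ ≤ _ := setLIntegral_le_lintegral _ _
    by_contra h
    simp only [not_lt, top_le_iff] at h
    rw [h, ENNReal.mul_top (by simp [hm0, ENNReal.ofReal_eq_zero, not_le])] at hle
    exact absurd (top_le_iff.1 hle) hν.2.2.ne
  refine ⟨⟨⟨fun k => {0} ∪ {y : Eucl n | 1/(k+1 : ℝ) ≤ ‖y‖}, fun _ => trivial, ?_, ?_⟩⟩⟩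
  · intro k
    refine lt_of_le_of_lt (measure_union_le _ _) ?_
    rw [hν.1, zero_add]
    exact hfar _ (by positivity)
  · refine eq_univ_of_forall fun y => ?_
    by_cases hy : y = 0
    · exact mem_iUnion.2 ⟨0, Or.inl hy⟩
    · have h0 : 0 < ‖y‖ := norm_pos_iff.2 hy
      obtain ⟨k, hk⟩ := exists_nat_gt (1/‖y‖)
      refine mem_iUnion.2 ⟨k, Or.inr ?_⟩
      show 1/(k+1:ℝ) ≤ ‖y‖
      rw [div_le_iff₀ (by positivity)]
      have : 1 / ‖y‖ * ‖y‖ = 1 := by field_simp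
      nlinarith [h0]

lemma levy_finite_far {n : ℕ} {ν : Measure (Eucl n)} (hν : IsSymmLevy ν)
    {δ : ℝ} (hδ : 0 < δ) : ν {y : Eucl n | δ ≤ ‖y‖} < ⊤ := by
  set m : ℝ := min 1 (δ^2) with hm
  have hm0 : 0 < m := lt_min one_pos (by positivity)
  have hle : ENNReal.ofReal m * ν {y : Eucl n | δ ≤ ‖y‖}
      ≤ ∫⁻ y, ENNReal.ofReal (min 1 (‖y‖ ^ 2)) ∂ν := by
    rw [← setLIntegral_const]
    calc ∫⁻ _ in {y : Eucl n | δ ≤ ‖y‖}, ENNReal.ofReal m ∂ν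
        ≤ ∫⁻ y in {y : Eucl n | δ ≤ ‖y‖}, ENNReal.ofReal (min 1 (‖y‖^2)) ∂ν := by
          refine setLIntegral_mono (by fun_prop) ?_
          intro y hy
          have hy' : δ ≤ ‖y‖ := hy
          refine ENNReal.ofReal_le_ofReal (min_le_min le_rfl ?_)
          nlinarith [norm_nonneg y, hδ.le]
      _ ≤ _ := setLIntegral_le_lintegral _ _
  by_contra h
  simp only [not_lt, top_le_iff] at h
  rw [h, ENNReal.mul_top (by simp [hm0, ENNReal.ofReal_eq_zero, not_le])] at hle
  exact absurd (top_le_iff.1 hle) hν.2.2.ne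

-- symmetry of ν as a map equality
lemma levy_map_neg {n : ℕ} {ν : Measure (Eucl n)} (hν : IsSymmLevy ν) :
    Measure.map Neg.neg ν = ν := by
  refine Measure.ext fun A hA => ?_
  rw [Measure.map_apply measurable_neg hA]
  have : Neg.neg ⁻¹' A = -A := by
    ext x; simp [Set.mem_neg]
  rw [this, hν.2.1 A hA]

lemma lintegral_neg_levy {n : ℕ} {ν : Measure (Eucl n)} (hν : IsSymmLevy ν)
    {G : Eucl n → ℝ≥0∞} (hG : Measurable G) :
    ∫⁻ z, G (-z) ∂ν = ∫⁻ z, G z ∂ν := by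
  conv_rhs => rw [← levy_map_neg hν]
  rw [lintegral_map hG measurable_neg]

/-- The key change-of-variables/symmetry lemma. -/
lemma swap_lemma {n : ℕ} {ν : Measure (Eucl n)} (hν : IsSymmLevy ν)
    (H : Eucl n → Eucl n → ℝ≥0∞) (hH : Measurable (uncurry H)) :
    ∫⁻ y, ∫⁻ z, H y (y + z) ∂ν = ∫⁻ y, ∫⁻ z, H (y + z) y ∂ν := by
  haveI : SigmaFinite ν := sigmaFinite_of_levy hν
  have hmadd : Measurable fun p : Eucl n × Eucl n => p.1 + p.2 :=
    measurable_fst.add measurable_snd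
  have h1 : Measurable (uncurry fun y z => H y (y + z)) := by
    exact hH.comp (measurable_fst.prodMk hmadd)
  have h2 : Measurable (uncurry fun z y => H (y + z) y) := by
    exact hH.comp ((measurable_snd.add measurable_fst).prodMk measurable_snd)
  have h3 : Measurable (uncurry fun y z => H (y + z) y) := by
    exact hH.comp (hmadd.prodMk measurable_fst)
  calc ∫⁻ y, ∫⁻ z, H y (y + z) ∂ν
      = ∫⁻ z, ∫⁻ y, H y (y + z) ∂(volume : Measure (Eucl n)) ∂ν :=
        lintegral_lintegral_swap h1.aemeasurable
    _ = ∫⁻ z, ∫⁻ y, H (y - z) y ∂(volume : Measure (Eucl n)) ∂ν := by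
        refine lintegral_congr fun z => ?_
        rw [← lintegral_add_right_eq_self (fun y => H (y - z) y) z]
        simp
    _ = ∫⁻ z, ∫⁻ y, H (y + z) y ∂(volume : Measure (Eucl n)) ∂ν := by
        have hmeas : Measurable fun z => ∫⁻ y, H (y + z) y ∂(volume : Measure (Eucl n)) := by
          exact Measurable.lintegral_prod_right h2
        have := lintegral_neg_levy hν hmeas
        simp only [sub_eq_add_neg]
        rw [← this]
    _ = ∫⁻ y, ∫⁻ z, H (y + z) y ∂ν := (lintegral_lintegral_swap h3.aemeasurable).symm

/-- Shifts of a null set are ν-null for a.e. base point. -/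
lemma ae_null_shift {n : ℕ} {ν : Measure (Eucl n)} (hν : IsSymmLevy ν)
    {N : Set (Eucl n)} (hNm : MeasurableSet N) (hN0 : (volume : Measure (Eucl n)) N = 0) :
    ∀ᵐ y ∂(volume : Measure (Eucl n)), ν {z | y + z ∈ N} = 0 := by
  haveI : SigmaFinite ν := sigmaFinite_of_levy hν
  have hind : Measurable (uncurry fun y z : Eucl n => N.indicator (fun _ => (1:ℝ≥0∞)) (y + z)) := by
    exact (measurable_one.indicator hNm).comp (measurable_fst.add measurable_snd)
  have hmeas : Measurable fun y => ∫⁻ z, N.indicator (fun _ => (1:ℝ≥0∞)) (y + z) ∂ν :=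
    Measurable.lintegral_prod_right hind
  have hkey : ∫⁻ y, ∫⁻ z, N.indicator (fun _ => (1:ℝ≥0∞)) (y + z) ∂ν = 0 := by
    rw [lintegral_lintegral_swap hind.aemeasurable]
    have : ∀ z : Eucl n, ∫⁻ y, N.indicator (fun _ => (1:ℝ≥0∞)) (y + z)
        ∂(volume : Measure (Eucl n)) = 0 := by
      intro z
      rw [lintegral_add_right_eq_self (fun y => N.indicator (fun _ => (1:ℝ≥0∞)) y) z,
        lintegral_indicator hNm]
      simp [hN0]
    simp [this]
  have h0 := (lintegral_eq_zero_iff hmeas).1 hkey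
  filter_upwards [h0] with y hy
  have : ∫⁻ z, N.indicator (fun _ => (1:ℝ≥0∞)) (y + z) ∂ν = 0 := hy
  rw [← this]
  have hset : {z : Eucl n | y + z ∈ N} = (fun z => y + z) ⁻¹' N := rfl
  rw [hset, ← lintegral_indicator_one (measurable_const_add y hNm)]
  refine lintegral_congr fun z => ?_
  simp [Set.indicator_apply]

lemma iter_add {n : ℕ} {ν : Measure (Eucl n)} [SigmaFinite ν]
    (f g : Eucl n → Eucl n → ℝ≥0∞) (hf : Measurable (uncurry f)) (hg : Measurable (uncurry g)) :
    ∫⁻ y, ∫⁻ z, (f y z + g y z) ∂ν =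
      (∫⁻ y, ∫⁻ z, f y z ∂ν) + ∫⁻ y, ∫⁻ z, g y z ∂ν := by
  have h1 : ∀ y, (fun z => f y z) = uncurry f ∘ (Prod.mk y) := fun y => rfl
  have hinner : ∀ y, ∫⁻ z, (f y z + g y z) ∂ν = (∫⁻ z, f y z ∂ν) + ∫⁻ z, g y z ∂ν := by
    intro y
    exact lintegral_add_left (hf.comp measurable_prodMk_left) _
  rw [lintegral_congr hinner]
  exact lintegral_add_left (Measurable.lintegral_prod_right hf) _

end AuxLemmas

open Function in
set_option maxHeartbeats 2000000 in
theorem dirichlet_stmt19 {n : ℕ} (ν : Measure (Eucl n)) (hν : IsSymmLevy ν)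
    (hsupp : ∀ R : ℝ, 0 < R → 0 < ν {y : Eucl n | R < ‖y‖})
    (Ω : Set (Eucl n)) (hΩo : IsOpen Ω) (hΩne : Ω.Nonempty)
    (hΩb : Bornology.IsBounded Ω) :
    0 < (⨆ ε ∈ Set.Ioi (0:ℝ), ⨅ x ∈ Ω,
          ν {z : Eucl n | z + x ∉ Metric.thickening ε Ω}) ∧
    ∀ f g u : Eucl n → ℝ,
      MemLp f ⊤ ((volume : Measure (Eucl n)).restrict Ω) →
      MemLp g ⊤ ((volume : Measure (Eucl n)).restrict Ωᶜ) →
      IsWeakSol ν Ω f g u →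
      ∀ᵐ x ∂(volume : Measure (Eucl n)),
        ENNReal.ofReal (u x) ≤
          (⨆ ε ∈ Set.Ioi (0:ℝ), ⨅ x' ∈ Ω,
              ν {z : Eucl n | z + x' ∉ Metric.thickening ε Ω})⁻¹ *
            eLpNorm f ⊤ ((volume : Measure (Eucl n)).restrict Ω) +
          eLpNorm g ⊤ ((volume : Measure (Eucl n)).restrict Ωᶜ) := by
  haveI : SigmaFinite ν := sigmaFinite_of_levy hν
  have hΩm : MeasurableSet Ω := hΩo.measurableSet
  set c : ℝ≥0∞ := ⨆ ε ∈ Set.Ioi (0:ℝ), ⨅ x ∈ Ω,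
      ν {z : Eucl n | z + x ∉ Metric.thickening ε Ω} with hc
  -- Part 1 : c > 0
  have hc0 : 0 < c := by
    obtain ⟨R, hR⟩ := hΩb.subset_closedBall 0
    set R' := max R 0 with hR'
    have hR'0 : 0 ≤ R' := le_max_right _ _
    have hsub : Ω ⊆ Metric.closedBall 0 R' :=
      hR.trans (Metric.closedBall_subset_closedBall (le_max_left _ _))
    have hm : 0 < ν {y : Eucl n | 2*R' + 1 < ‖y‖} := hsupp _ (by positivity)
    refine lt_of_lt_of_le hm ?_
    refine le_trans ?_
      (le_iSup₂ (f := fun ε (_ : ε ∈ Set.Ioi (0:ℝ)) => ⨅ x ∈ Ω,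
        ν {z : Eucl n | z + x ∉ Metric.thickening ε Ω}) 1 (Set.mem_Ioi.2 one_pos))
    refine le_iInf₂ fun x hx => measure_mono fun z hz => ?_
    intro hmem
    obtain ⟨w, hwΩ, hd⟩ := Metric.mem_thickening_iff.1 hmem
    have h1 : ‖x‖ ≤ R' := by
      simpa [Metric.mem_closedBall, dist_zero_right] using hsub hx
    have h2 : ‖w‖ ≤ R' := by
      simpa [Metric.mem_closedBall, dist_zero_right] using hsub hwΩ
    have h3 : ‖z + x‖ ≤ 1 + ‖w‖ := by
      have := dist_triangle (z + x) w 0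
      simp only [dist_zero_right] at this
      linarith [this, hd.le]
    have h4 : ‖z‖ ≤ ‖z + x‖ + ‖x‖ := by
      calc ‖z‖ = ‖(z + x) - x‖ := by rw [add_sub_cancel_right]
        _ ≤ ‖z + x‖ + ‖x‖ := norm_sub_le _ _
    have hz' : 2*R' + 1 < ‖z‖ := hz
    linarith
  have hctop : c < ⊤ := by
    obtain ⟨x₀, hx₀⟩ := hΩne
    obtain ⟨δ₀, hδ₀, hball⟩ := Metric.isOpen_iff.1 hΩo x₀ hx₀
    refine lt_of_le_of_lt ?_ (levy_finite_far hν hδ₀)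
    refine iSup₂_le fun ε hε => le_trans (iInf₂_le x₀ hx₀) (measure_mono ?_)
    intro z hz
    by_contra h
    change ¬ (δ₀ ≤ ‖z‖) at h
    refine hz (Metric.self_subset_thickening (Set.mem_Ioi.1 hε) Ω (hball ?_))
    have : dist (z + x₀) x₀ = ‖z‖ := by
      rw [dist_eq_norm, add_sub_cancel_right]
    rw [Metric.mem_ball, this]
    exact lt_of_not_ge h
  refine ⟨hc0, ?_⟩
  intro f g u hf hg hsol
  obtain ⟨⟨hum, husob⟩, hug, hweak⟩ := hsol
  set Nf := eLpNorm f ⊤ ((volume : Measure (Eucl n)).restrict Ω) with hNfdef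
  set Ng := eLpNorm g ⊤ ((volume : Measure (Eucl n)).restrict Ωᶜ) with hNgdef
  have hNft : Nf ≠ ⊤ := hf.2.ne
  have hNgt : Ng ≠ ⊤ := hg.2.ne
  have hcinvt : c⁻¹ ≠ ⊤ := by simp [ENNReal.inv_ne_top, hc0.ne']
  have hκt : c⁻¹ * Nf ≠ ⊤ := ENNReal.mul_ne_top hcinvt hNft
  set κ := (c⁻¹ * Nf).toReal with hκdef
  set G := Ng.toReal with hGdef
  set K := κ + G with hKdef
  have hκ0 : 0 ≤ κ := ENNReal.toReal_nonneg
  have hG0 : 0 ≤ G := ENNReal.toReal_nonneg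
  have hK0 : 0 ≤ K := add_nonneg hκ0 hG0
  have hGK : G ≤ K := le_add_of_nonneg_left hκ0
  have hRHS : c⁻¹ * Nf + Ng = ENNReal.ofReal K := by
    rw [hKdef, ENNReal.ofReal_add hκ0 hG0, hκdef, hGdef,
      ENNReal.ofReal_toReal hκt, ENNReal.ofReal_toReal hNgt]
  suffices h : ∀ᵐ x ∂(volume : Measure (Eucl n)), u x ≤ K by
    filter_upwards [h] with x hx
    calc ENNReal.ofReal (u x) ≤ ENNReal.ofReal K := ENNReal.ofReal_le_ofReal hx
      _ = c⁻¹ * Nf + Ng := hRHS.symm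
  -- truncated function and test function
  set W : Eucl n → ℝ := fun x => if x ∈ Ω then u x else min (u x) G with hWdef
  set φ : Eucl n → ℝ := fun x => max (W x - K) 0 with hφdef
  have hWm : Measurable W := Measurable.ite hΩm hum (hum.min measurable_const)
  have hφm : Measurable φ := (hWm.sub measurable_const).max measurable_const
  have hφ0 : ∀ x, 0 ≤ φ x := fun x => le_max_right _ _
  have hWle : ∀ x, x ∉ Ω → W x ≤ G := by
    intro x hx
    simp only [hWdef, if_neg hx]
    exact min_le_right _ _
  have hφ_offΩ : ∀ x, x ∉ Ω → φ x = 0 := by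
    intro x hx
    simp only [hφdef]
    exact max_eq_right (by linarith [hWle x hx])
  have hWΩ : ∀ x, x ∈ Ω → W x = u x := by
    intro x hx; simp only [hWdef, if_pos hx]
  -- the exceptional null set
  set N : Set (Eucl n) := Ωᶜ ∩ {x | G < u x} with hNdef
  have hNm : MeasurableSet N := hΩm.compl.inter (measurableSet_lt measurable_const hum)
  have hgoffΩ : ∀ᵐ x ∂(volume : Measure (Eucl n)), x ∉ Ω → u x ≤ G := by
    have h1 : ∀ᵐ x ∂((volume : Measure (Eucl n)).restrict Ωᶜ), (‖g x‖₊ : ℝ≥0∞) ≤ Ng := by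
      rw [hNgdef, eLpNorm_exponent_top]
      exact ae_le_eLpNormEssSup
    rw [ae_restrict_iff' hΩm.compl] at h1
    filter_upwards [h1, hug] with x h1x h2x hx
    have hb : ‖g x‖ ≤ G := by
      have h3 := ENNReal.toReal_mono hNgt (h1x (by simpa using hx))
      simpa [hGdef] using h3
    rw [h2x hx]
    have : |g x| ≤ G := by rwa [Real.norm_eq_abs] at hb
    linarith [le_abs_self (g x)]
  have hN0 : (volume : Measure (Eucl n)) N = 0 := by
    have h := hgoffΩ
    rw [ae_iff] at h
    refine measure_mono_null ?_ h
    intro x hx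
    simp only [Set.mem_setOf_eq, not_forall]
    exact ⟨hx.1, not_le.2 hx.2⟩
  have hWu : ∀ x, x ∉ N → W x = u x := by
    intro x hx
    by_cases hxΩ : x ∈ Ω
    · exact hWΩ x hxΩ
    · simp only [hWdef, if_neg hxΩ]
      refine min_eq_left ?_
      by_contra hlt
      exact hx ⟨hxΩ, lt_of_not_ge hlt⟩
  have hgood : ∀ᵐ y ∂(volume : Measure (Eucl n)), y ∉ N ∧ ν {z | y + z ∈ N} = 0 := by
    refine Eventually.and ?_ (ae_null_shift hν hNm hN0)
    rw [ae_iff]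
    simpa [not_not] using hN0
  have hae_inner : ∀ᵐ y ∂(volume : Measure (Eucl n)), ∀ᵐ z ∂ν, y + z ∉ N := by
    filter_upwards [hgood] with y hy
    rw [ae_iff]
    simpa using hy.2
  -- measurability of building blocks on the product space
  have hmadd : Measurable fun p : Eucl n × Eucl n => p.1 + p.2 := measurable_fst.add measurable_snd
  have hW2 : Measurable fun p : Eucl n × Eucl n => W (p.1 + p.2) := hWm.comp hmadd
  have hW1 : Measurable fun p : Eucl n × Eucl n => W p.1 := hWm.comp measurable_fst
  have hφ2 : Measurable fun p : Eucl n × Eucl n => φ (p.1 + p.2) := hφm.comp hmadd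
  have hφ1 : Measurable fun p : Eucl n × Eucl n => φ p.1 := hφm.comp measurable_fst
  -- finiteness pieces from sobSq u
  have husob' := husob
  unfold sobSq at husob'
  have hAu : (∫⁻ x in Ω, ENNReal.ofReal (u x ^ 2)) < ⊤ := lt_of_le_of_lt le_self_add husob'
  have hCu : (∫⁻ y in Ω, ∫⁻ z, ENNReal.ofReal ((u y - u (y + z)) ^ 2) ∂ν) < ⊤ := by
    have h2 : (1/2 : ℝ≥0∞) * (∫⁻ y in Ω, ∫⁻ z, ENNReal.ofReal ((u y - u (y + z)) ^ 2) ∂ν) < ⊤ :=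
      lt_of_le_of_lt le_add_self husob'
    rw [lt_top_iff_ne_top]
    intro hC
    rw [hC, ENNReal.mul_top (by norm_num)] at h2
    exact absurd h2 (lt_irrefl ⊤)
  -- switch between W and u inside the double integral over Ω
  have hCW : (∫⁻ y in Ω, ∫⁻ z, ENNReal.ofReal ((W y - W (y + z)) ^ 2) ∂ν) =
      ∫⁻ y in Ω, ∫⁻ z, ENNReal.ofReal ((u y - u (y + z)) ^ 2) ∂ν := by
    refine lintegral_congr_ae ?_
    filter_upwards [ae_restrict_of_ae hgood, ae_restrict_of_ae hae_inner] with y h1 h2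
    refine lintegral_congr_ae ?_
    filter_upwards [h2] with z hz
    rw [hWu y h1.1, hWu _ hz]
  have hCWlt : (∫⁻ y in Ω, ∫⁻ z, ENNReal.ofReal ((W y - W (y + z)) ^ 2) ∂ν) < ⊤ := by
    rw [hCW]; exact hCu
  -- φ² is dominated by u² on Ω
  have hAφ : (∫⁻ x in Ω, ENNReal.ofReal (φ x ^ 2)) < ⊤ := by
    refine lt_of_le_of_lt (setLIntegral_mono (by fun_prop) fun x hx => ?_) hAu
    refine ENNReal.ofReal_le_ofReal ?_
    have h1 : φ x = max (u x - K) 0 := by rw [hφdef]; simp [hWΩ x hx]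
    rcases le_total (u x) K with h | h
    · rw [h1, max_eq_right (by linarith)]
      simpa using sq_nonneg (u x)
    · rw [h1, max_eq_left (by linarith)]
      nlinarith
  -- the test function belongs to H
  have hφH : MemH ν Ω φ := by
    refine ⟨⟨hφm, ?_⟩, ae_of_all _ fun x hx => hφ_offΩ x hx⟩
    unfold sobSq
    refine ENNReal.add_lt_top.2 ⟨hAφ, ?_⟩
    have hmono : (∫⁻ y in Ω, ∫⁻ z, ENNReal.ofReal ((φ y - φ (y + z)) ^ 2) ∂ν) ≤
        ∫⁻ y in Ω, ∫⁻ z, ENNReal.ofReal ((W y - W (y + z)) ^ 2) ∂ν := by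
      refine lintegral_mono fun y => lintegral_mono fun z => ENNReal.ofReal_le_ofReal ?_
      have h1 : |φ y - φ (y + z)| ≤ |W y - W (y + z)| := by
        have h2 := abs_max_sub_max_le_abs (W y - K) (W (y + z) - K) 0
        have h3 : W y - K - (W (y + z) - K) = W y - W (y + z) := by ring
        rw [h3] at h2
        simpa [hφdef] using h2
      calc (φ y - φ (y + z))^2 = |φ y - φ (y + z)|^2 := (sq_abs _).symm
        _ ≤ |W y - W (y + z)|^2 := by nlinarith [abs_nonneg (φ y - φ (y + z)), abs_nonneg (W y - W (y+z))]
        _ = (W y - W (y + z))^2 := sq_abs _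
    calc (1/2 : ℝ≥0∞) * ∫⁻ y in Ω, ∫⁻ z, ENNReal.ofReal ((φ y - φ (y + z)) ^ 2) ∂ν
        ≤ (1/2 : ℝ≥0∞) * ∫⁻ y in Ω, ∫⁻ z, ENNReal.ofReal ((W y - W (y + z)) ^ 2) ∂ν :=
          mul_le_mul_right hmono _
      _ < ⊤ := ENNReal.mul_lt_top (by norm_num) hCWlt
  -- the bilinear integrand with truncation
  set F : Eucl n → Eucl n → ℝ := fun y z => (W y - W (y + z)) * (φ y - φ (y + z)) with hFdef
  have hFm : Measurable (uncurry F) := (hW1.sub hW2).mul (hφ1.sub hφ2)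
  have hFnn : ∀ y z, 0 ≤ F y z := by
    intro y z
    have h := prod_nonneg' (W y - K) (W (y + z) - K)
    rw [show W y - K - (W (y + z) - K) = W y - W (y + z) from by ring] at h
    simpa [hFdef, hφdef] using h
  have hFle : ∀ y z, F y z ≤ (W y - W (y + z))^2 := by
    intro y z
    have h := prod_le_sq (W y - K) (W (y + z) - K)
    rw [show W y - K - (W (y + z) - K) = W y - W (y + z) from by ring] at h
    simpa [hFdef, hφdef] using h
  set Jq : ℝ≥0∞ := ∫⁻ y, ∫⁻ z, ENNReal.ofReal (F y z) ∂ν with hJdef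
  set ind : Eucl n → ℝ≥0∞ := Ω.indicator (fun _ => 1) with hinddef
  have hindm : Measurable ind := measurable_const.indicator hΩm
  have hind1 : ∀ x, ind x ≠ ⊤ := by
    intro x; by_cases h : x ∈ Ω <;> simp [hinddef, Set.indicator_apply, h]
  have hptJ : ∀ y z, ENNReal.ofReal (F y z) ≤
      ind y * ENNReal.ofReal ((W y - W (y + z))^2) +
        ind (y + z) * ENNReal.ofReal ((W y - W (y + z))^2) := by
    intro y z
    by_cases hy : y ∈ Ω
    · refine le_trans ?_ le_self_add
      rw [show ind y = 1 from by simp [hinddef, Set.indicator_apply, hy], one_mul]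
      exact ENNReal.ofReal_le_ofReal (hFle y z)
    · by_cases hz : y + z ∈ Ω
      · refine le_trans ?_ le_add_self
        rw [show ind (y + z) = 1 from by simp [hinddef, Set.indicator_apply, hz], one_mul]
        exact ENNReal.ofReal_le_ofReal (hFle y z)
      · have : F y z = 0 := by
          simp [hFdef, hφ_offΩ _ hy, hφ_offΩ _ hz]
        simp [this]
  have hm1 : Measurable (uncurry fun y z : Eucl n =>
      ind y * ENNReal.ofReal ((W y - W (y + z))^2)) :=
    (hindm.comp measurable_fst).mul
      (ENNReal.measurable_ofReal.comp ((hW1.sub hW2).pow_const 2))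
  have hm2 : Measurable (uncurry fun y z : Eucl n =>
      ind (y + z) * ENNReal.ofReal ((W y - W (y + z))^2)) :=
    (hindm.comp hmadd).mul
      (ENNReal.measurable_ofReal.comp ((hW1.sub hW2).pow_const 2))
  have hA1 : (∫⁻ y, ∫⁻ z, ind y * ENNReal.ofReal ((W y - W (y + z))^2) ∂ν) =
      ∫⁻ y in Ω, ∫⁻ z, ENNReal.ofReal ((W y - W (y + z)) ^ 2) ∂ν := by
    rw [← lintegral_indicator hΩm]
    refine lintegral_congr fun y => ?_
    rw [lintegral_const_mul' _ _ (hind1 y)]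
    by_cases hy : y ∈ Ω <;> simp [hinddef, Set.indicator_apply, hy]
  have hA2 : (∫⁻ y, ∫⁻ z, ind (y + z) * ENNReal.ofReal ((W y - W (y + z))^2) ∂ν) =
      ∫⁻ y, ∫⁻ z, ind y * ENNReal.ofReal ((W y - W (y + z))^2) ∂ν := by
    have hswap := swap_lemma hν (fun y w => ind w * ENNReal.ofReal ((W y - W w)^2))
      ((hindm.comp measurable_snd).mul
        (ENNReal.measurable_ofReal.comp ((hW1.sub (hWm.comp measurable_snd)).pow_const 2)))
    calc (∫⁻ y, ∫⁻ z, ind (y + z) * ENNReal.ofReal ((W y - W (y + z))^2) ∂ν)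
        = ∫⁻ y, ∫⁻ z, ind y * ENNReal.ofReal ((W (y + z) - W y)^2) ∂ν := hswap
      _ = ∫⁻ y, ∫⁻ z, ind y * ENNReal.ofReal ((W y - W (y + z))^2) ∂ν := by
          refine lintegral_congr fun y => lintegral_congr fun z => ?_
          rw [show (W (y + z) - W y)^2 = (W y - W (y + z))^2 from by ring]
  have hJlt : Jq < ⊤ := by
    calc Jq ≤ (∫⁻ y, ∫⁻ z, ind y * ENNReal.ofReal ((W y - W (y + z))^2) ∂ν) +
        ∫⁻ y, ∫⁻ z, ind (y + z) * ENNReal.ofReal ((W y - W (y + z))^2) ∂ν := by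
          rw [hJdef, ← iter_add _ _ hm1 hm2]
          exact lintegral_mono fun y => lintegral_mono fun z => hptJ y z
      _ < ⊤ := by
          rw [hA2, hA1]
          exact ENNReal.add_lt_top.2 ⟨hCWlt, hCWlt⟩
  -- the mass of the test function
  set B : ℝ≥0∞ := ∫⁻ x in Ω, ENNReal.ofReal (φ x) with hBdef
  have hΩvol : (volume : Measure (Eucl n)) Ω < ⊤ := by
    obtain ⟨R, hR⟩ := hΩb.subset_closedBall 0
    exact lt_of_le_of_lt (measure_mono hR) (isCompact_closedBall 0 R).measure_lt_top
  have hBlt : B < ⊤ := by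
    calc B ≤ ∫⁻ x in Ω, (ENNReal.ofReal (φ x ^ 2) + 1) := by
          refine lintegral_mono fun x => ?_
          calc ENNReal.ofReal (φ x) ≤ ENNReal.ofReal (φ x ^ 2 + 1) :=
                ENNReal.ofReal_le_ofReal (by nlinarith [sq_nonneg (φ x - 1)])
            _ = ENNReal.ofReal (φ x ^ 2) + 1 := by
                rw [ENNReal.ofReal_add (sq_nonneg _) zero_le_one, ENNReal.ofReal_one]
      _ = (∫⁻ x in Ω, ENNReal.ofReal (φ x ^ 2)) + (volume : Measure (Eucl n)) Ω := by
          rw [lintegral_add_right _ measurable_const, setLIntegral_one]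
      _ < ⊤ := ENNReal.add_lt_top.2 ⟨hAφ, hΩvol⟩
  have hφint : Integrable φ ((volume : Measure (Eucl n)).restrict Ω) := by
    refine ⟨hφm.aestronglyMeasurable, ?_⟩
    rw [hasFiniteIntegral_iff_ofReal (ae_of_all _ hφ0)]
    exact hBlt
  -- evaluate formB through nonnegative lintegrals
  have hglinm : Measurable fun y => ∫⁻ z, ENNReal.ofReal (F y z) ∂ν :=
    Measurable.lintegral_prod_right (ENNReal.measurable_ofReal.comp hFm)
  have hJdef' : (∫⁻ y, ∫⁻ z, ENNReal.ofReal (F y z) ∂ν) = Jq := hJdef.symm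
  have hform : formB ν u φ = (1/2) * Jq.toReal := by
    unfold formB
    congr 1
    have hglinlt : ∀ᵐ y ∂(volume : Measure (Eucl n)), (∫⁻ z, ENNReal.ofReal (F y z) ∂ν) < ⊤ := by
      refine ae_lt_top hglinm ?_
      rw [hJdef']
      exact hJlt.ne
    have hstep1 : ∀ᵐ y ∂(volume : Measure (Eucl n)),
        (∫ z, (u y - u (y + z)) * (φ y - φ (y + z)) ∂ν) = ∫ z, F y z ∂ν := by
      filter_upwards [hgood, hae_inner] with y h1 h2
      refine integral_congr_ae ?_
      filter_upwards [h2] with z hz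
      simp only [hFdef]
      rw [hWu y h1.1, hWu _ hz]
    have hstep2 : ∀ y, (∫ z, F y z ∂ν) = (∫⁻ z, ENNReal.ofReal (F y z) ∂ν).toReal := by
      intro y
      exact integral_eq_lintegral_of_nonneg_ae (ae_of_all _ fun z => hFnn y z)
        ((hFm.comp measurable_prodMk_left).aestronglyMeasurable)
    calc ∫ y, ∫ z, (u y - u (y + z)) * (φ y - φ (y + z)) ∂ν
        = ∫ y, (∫⁻ z, ENNReal.ofReal (F y z) ∂ν).toReal := by
          refine integral_congr_ae ?_
          filter_upwards [hstep1] with y h1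
          rw [h1, hstep2 y]
      _ = (∫⁻ y, ∫⁻ z, ENNReal.ofReal (F y z) ∂ν).toReal :=
          integral_toReal hglinm.aemeasurable hglinlt
      _ = Jq.toReal := by rw [hJdef']
  have hfφ : ∫ x in Ω, f x * φ x = (1/2) * Jq.toReal := by
    rw [← hweak φ hφH, hform]
  -- upper bound on the right-hand side
  have hupper : ENNReal.ofReal (∫ x in Ω, f x * φ x) ≤ Nf * B := by
    have hfbd : ∀ᵐ x ∂((volume : Measure (Eucl n)).restrict Ω), |f x| ≤ Nf.toReal := by
      have h1 : ∀ᵐ x ∂((volume : Measure (Eucl n)).restrict Ω), (‖f x‖₊ : ℝ≥0∞) ≤ Nf := by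
        rw [hNfdef, eLpNorm_exponent_top]
        exact ae_le_eLpNormEssSup
      filter_upwards [h1] with x hx
      have := ENNReal.toReal_mono hNft hx
      simpa [Real.norm_eq_abs] using this
    by_cases hint : Integrable (fun x => f x * φ x) ((volume : Measure (Eucl n)).restrict Ω)
    · have h1 : (∫ x in Ω, f x * φ x) ≤ ∫ x in Ω, Nf.toReal * φ x := by
        refine integral_mono_ae hint (hφint.const_mul _) ?_
        filter_upwards [hfbd] with x hx
        exact mul_le_mul_of_nonneg_right (le_trans (le_abs_self _) hx) (hφ0 x)
      have h2 : (∫ x in Ω, Nf.toReal * φ x) = Nf.toReal * B.toReal := by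
        rw [integral_const_mul]
        congr 1
        rw [hBdef]
        exact integral_eq_lintegral_of_nonneg_ae (ae_of_all _ hφ0) hφm.aestronglyMeasurable
      calc ENNReal.ofReal (∫ x in Ω, f x * φ x) ≤ ENNReal.ofReal (Nf.toReal * B.toReal) :=
            ENNReal.ofReal_le_ofReal (h1.trans h2.le)
        _ = Nf * B := by
            rw [ENNReal.ofReal_mul ENNReal.toReal_nonneg, ENNReal.ofReal_toReal hNft,
              ENNReal.ofReal_toReal hBlt.ne]
    · rw [integral_undef hint]
      simp
  -- decomposition of Jq
  set Qt : ℝ≥0∞ := ∫⁻ y, ∫⁻ z, ENNReal.ofReal ((φ y - φ (y + z))^2) ∂ν with hQdef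
  set Xt : ℝ≥0∞ := ∫⁻ y, ∫⁻ z, ENNReal.ofReal (φ y * max (K - W (y + z)) 0) ∂ν with hXdef
  set Xt' : ℝ≥0∞ := ∫⁻ y, ∫⁻ z, ENNReal.ofReal (max (K - W y) 0 * φ (y + z)) ∂ν with hX'def
  have mS : Measurable (uncurry fun y z : Eucl n => ENNReal.ofReal ((φ y - φ (y + z))^2)) :=
    ENNReal.measurable_ofReal.comp ((hφ1.sub hφ2).pow_const 2)
  have mT : Measurable (uncurry fun y z : Eucl n =>
      ENNReal.ofReal (φ y * max (K - W (y + z)) 0)) :=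
    ENNReal.measurable_ofReal.comp (hφ1.mul ((measurable_const.sub hW2).max measurable_const))
  have mT' : Measurable (uncurry fun y z : Eucl n =>
      ENNReal.ofReal (max (K - W y) 0 * φ (y + z))) :=
    ENNReal.measurable_ofReal.comp (((measurable_const.sub hW1).max measurable_const).mul hφ2)
  have hptsplit : ∀ y z, ENNReal.ofReal (F y z) =
      ENNReal.ofReal ((φ y - φ (y + z))^2) + ENNReal.ofReal (φ y * max (K - W (y + z)) 0)
        + ENNReal.ofReal (max (K - W y) 0 * φ (y + z)) := by
    intro y z
    have h := key_identity (W y - K) (W (y + z) - K)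
    rw [show W y - K - (W (y + z) - K) = W y - W (y + z) from by ring,
      show -(W (y + z) - K) = K - W (y + z) from by ring,
      show -(W y - K) = K - W y from by ring] at h
    have hF' : F y z = (φ y - φ (y + z))^2 + φ y * max (K - W (y + z)) 0
        + max (K - W y) 0 * φ (y + z) := by
      simp only [hFdef, hφdef]
      exact h
    rw [hF',
      ENNReal.ofReal_add
        (add_nonneg (sq_nonneg _) (mul_nonneg (hφ0 y) (le_max_right _ _)))
        (mul_nonneg (le_max_right _ _) (hφ0 (y + z))),
      ENNReal.ofReal_add (sq_nonneg _) (mul_nonneg (hφ0 y) (le_max_right _ _))]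
  have hsplit : Jq = Qt + Xt + Xt' := by
    rw [hJdef]
    calc ∫⁻ y, ∫⁻ z, ENNReal.ofReal (F y z) ∂ν
        = ∫⁻ y, ∫⁻ z, ((ENNReal.ofReal ((φ y - φ (y + z))^2)
            + ENNReal.ofReal (φ y * max (K - W (y + z)) 0))
            + ENNReal.ofReal (max (K - W y) 0 * φ (y + z))) ∂ν :=
          lintegral_congr fun y => lintegral_congr fun z => hptsplit y z
      _ = Qt + Xt + Xt' := by
          rw [iter_add (fun y z => ENNReal.ofReal ((φ y - φ (y + z))^2)
              + ENNReal.ofReal (φ y * max (K - W (y + z)) 0))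
            (fun y z => ENNReal.ofReal (max (K - W y) 0 * φ (y + z))) (mS.add mT) mT',
            iter_add (fun y z => ENNReal.ofReal ((φ y - φ (y + z))^2))
              (fun y z => ENNReal.ofReal (φ y * max (K - W (y + z)) 0)) mS mT]
  have hXX : Xt' = Xt := by
    have hswap := swap_lemma hν (fun y w => ENNReal.ofReal (φ y * max (K - W w) 0))
      (ENNReal.measurable_ofReal.comp (hφ1.mul
        ((measurable_const.sub (hWm.comp measurable_snd)).max measurable_const)))
    calc Xt' = ∫⁻ y, ∫⁻ z, ENNReal.ofReal (φ (y + z) * max (K - W y) 0) ∂ν := by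
          rw [hX'def]
          exact lintegral_congr fun y => lintegral_congr fun z => by rw [mul_comm]
      _ = Xt := by rw [hXdef]; exact hswap.symm
  -- lower bound on Xt
  have hνlow : ∀ y, y ∈ Ω → c ≤ ν {z | y + z ∉ Ω} := by
    intro y hy
    rw [hc]
    refine iSup₂_le fun ε hε => ?_
    refine le_trans (iInf₂_le y hy) (measure_mono ?_)
    intro z hz hmem
    exact hz (Metric.self_subset_thickening (Set.mem_Ioi.1 hε) Ω (by rwa [add_comm] at hmem))
  have hSmeas : ∀ y : Eucl n, MeasurableSet {z : Eucl n | y + z ∉ Ω} :=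
    fun y => measurable_const_add y hΩm.compl
  have hXlow : Nf * B ≤ Xt := by
    have hinner : ∀ y ∈ Ω, ENNReal.ofReal (κ * φ y) * c ≤
        ∫⁻ z, ENNReal.ofReal (φ y * max (K - W (y + z)) 0) ∂ν := by
      intro y hy
      calc ENNReal.ofReal (κ * φ y) * c ≤ ENNReal.ofReal (κ * φ y) * ν {z | y + z ∉ Ω} :=
            mul_le_mul_right (hνlow y hy) _
        _ = ∫⁻ z in {z | y + z ∉ Ω}, ENNReal.ofReal (κ * φ y) ∂ν := (setLIntegral_const _ _).symm
        _ ≤ ∫⁻ z in {z | y + z ∉ Ω}, ENNReal.ofReal (φ y * max (K - W (y + z)) 0) ∂ν := by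
            refine setLIntegral_mono
              (ENNReal.measurable_ofReal.comp (measurable_const.mul
                ((measurable_const.sub (hWm.comp (measurable_const_add y))).max measurable_const)))
              fun z hz => ?_
            refine ENNReal.ofReal_le_ofReal ?_
            have h1 : W (y + z) ≤ G := hWle _ hz
            have h2 : κ ≤ max (K - W (y + z)) 0 :=
              le_max_of_le_left (by rw [hKdef]; linarith)
            calc κ * φ y ≤ max (K - W (y + z)) 0 * φ y :=
                  mul_le_mul_of_nonneg_right h2 (hφ0 y)
              _ = φ y * max (K - W (y + z)) 0 := mul_comm _ _
        _ ≤ ∫⁻ z, ENNReal.ofReal (φ y * max (K - W (y + z)) 0) ∂ν :=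
            setLIntegral_le_lintegral _ _
    have hκc : ENNReal.ofReal κ * c = Nf := by
      rw [hκdef, ENNReal.ofReal_toReal hκt, mul_comm c⁻¹ Nf, mul_assoc,
        ENNReal.inv_mul_cancel hc0.ne' hctop.ne, mul_one]
    calc Nf * B = (ENNReal.ofReal κ * c) * B := by rw [hκc]
      _ = ∫⁻ y in Ω, ENNReal.ofReal (κ * φ y) * c := by
          rw [hBdef, ← lintegral_const_mul' (ENNReal.ofReal κ * c) _
            (ENNReal.mul_ne_top ENNReal.ofReal_ne_top hctop.ne)]
          refine lintegral_congr fun y => ?_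
          rw [ENNReal.ofReal_mul hκ0]
          ring
      _ ≤ ∫⁻ y in Ω, ∫⁻ z, ENNReal.ofReal (φ y * max (K - W (y + z)) 0) ∂ν := by
          refine setLIntegral_mono ?_ hinner
          exact Measurable.lintegral_prod_right mT
      _ ≤ Xt := by rw [hXdef]; exact setLIntegral_le_lintegral _ _
  -- cancellation
  have h12 : ENNReal.ofReal ((1:ℝ)/2) = (1/2 : ℝ≥0∞) := by
    rw [one_div, one_div, ENNReal.ofReal_inv_of_pos two_pos, ENNReal.ofReal_ofNat]
  have hhalf : (1/2 : ℝ≥0∞) * Jq ≤ Nf * B := by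
    have he : ENNReal.ofReal ((1/2) * Jq.toReal) = (1/2 : ℝ≥0∞) * Jq := by
      rw [ENNReal.ofReal_mul (by norm_num), ENNReal.ofReal_toReal hJlt.ne, h12]
    calc (1/2 : ℝ≥0∞) * Jq = ENNReal.ofReal (∫ x in Ω, f x * φ x) := by rw [hfφ, he]
      _ ≤ Nf * B := hupper
  have hXfin : Xt ≠ ⊤ := by
    refine ne_top_of_le_ne_top hJlt.ne ?_
    rw [hsplit]
    exact le_trans le_add_self le_self_add
  have h21 : (1/2 : ℝ≥0∞) * 2 = 1 := by
    rw [one_div]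
    exact ENNReal.inv_mul_cancel (by norm_num) (by norm_num)
  have hQ0 : Qt = 0 := by
    have hJQ : (1/2 : ℝ≥0∞) * Jq = (1/2) * Qt + Xt := by
      rw [hsplit, hXX, show Qt + Xt + Xt = Qt + 2 * Xt from by rw [two_mul, ← add_assoc],
        mul_add, ← mul_assoc, h21, one_mul]
    have h1 : (1/2 : ℝ≥0∞) * Qt + Xt ≤ 0 + Xt := by
      rw [zero_add]
      exact le_trans (le_trans hJQ.ge (hhalf.trans hXlow)) le_rfl
    have h3 := (ENNReal.add_le_add_iff_right hXfin).1 h1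
    have h4 : (1/2 : ℝ≥0∞) * Qt = 0 := le_antisymm h3 zero_le
    rcases mul_eq_zero.1 h4 with h | h
    · exact absurd h (by norm_num)
    · exact h
  -- conclude φ = 0 a.e.
  have hQlow : c * (∫⁻ y, ENNReal.ofReal (φ y ^ 2)) ≤ Qt := by
    rw [hQdef, ← lintegral_const_mul' c _ hctop.ne]
    refine lintegral_mono fun y => ?_
    by_cases hy : y ∈ Ω
    · calc c * ENNReal.ofReal (φ y ^ 2) ≤ ν {z | y + z ∉ Ω} * ENNReal.ofReal (φ y ^ 2) :=
            mul_le_mul_left (hνlow y hy) _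
        _ = ∫⁻ z in {z | y + z ∉ Ω}, ENNReal.ofReal (φ y ^ 2) ∂ν := by
            rw [setLIntegral_const, mul_comm]
        _ ≤ ∫⁻ z in {z | y + z ∉ Ω}, ENNReal.ofReal ((φ y - φ (y + z))^2) ∂ν := by
            refine setLIntegral_mono
              (ENNReal.measurable_ofReal.comp
                (((measurable_const.sub (hφm.comp (measurable_const_add y))).pow_const 2)))
              fun z hz => ?_
            rw [hφ_offΩ _ hz, sub_zero]
        _ ≤ ∫⁻ z, ENNReal.ofReal ((φ y - φ (y + z))^2) ∂ν := setLIntegral_le_lintegral _ _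
    · simp [hφ_offΩ _ hy]
  have hSq0 : (∫⁻ y, ENNReal.ofReal (φ y ^ 2)) = 0 := by
    have h1 := hQlow
    rw [hQ0] at h1
    have h4 : c * (∫⁻ y, ENNReal.ofReal (φ y ^ 2)) = 0 := le_antisymm h1 zero_le
    rcases mul_eq_zero.1 h4 with h | h
    · exact absurd h hc0.ne'
    · exact h
  have hφae : ∀ᵐ y ∂(volume : Measure (Eucl n)), φ y = 0 := by
    have h := (lintegral_eq_zero_iff
      (ENNReal.measurable_ofReal.comp (hφm.pow_const 2))).1 hSq0
    filter_upwards [h] with y hy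
    have h2 : φ y ^ 2 ≤ 0 := by
      simpa [ENNReal.ofReal_eq_zero] using hy
    exact le_antisymm (by nlinarith [hφ0 y]) (hφ0 y)
  filter_upwards [hφae, hgoffΩ] with x h1 h2
  by_cases hx : x ∈ Ω
  · have h5 : max (W x - K) 0 = 0 := by simpa [hφdef] using h1
    have h3 : W x - K ≤ 0 := by
      have h6 := le_max_left (W x - K) 0
      rw [h5] at h6
      exact h6
    have h7 := hWΩ x hx
    linarith
  · linarith [h2 hx, hGK]
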